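/- Let m̃, n, γ be positive integers with γ dividing gcd(2m̃, 2n) and γ ≥ 2. There exists an integer b coprime to γ with γ² dividing b²m̃ + n if and only if for every prime p dividing γ, setting α = min(v_p(m̃), v_p(n)) and β = v_p(γ): either v_p(m̃) ≠ v_p(n) and β ≤ α/2, or v_p(m̃) = v_p(n) = α and (β ≤ α/2, or β > α/2 and −n/m̃ (after dividing both by p^α) is a square modulo p^{2β−α}). -/

import Mathlib

/-- Bezout-style integer CRT for two coprime natural moduli. -/
lemma aux_crt (N M : ℕ) (h : N.Coprime M) (b₁ b₂ : ℤ) :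
    ∃ b : ℤ, (N : ℤ) ∣ b - b₁ ∧ (M : ℤ) ∣ b - b₂ := by
  obtain ⟨u, v, huv⟩ := Nat.isCoprime_iff_coprime.mpr h
  refine ⟨b₂ * (u * N) + b₁ * (v * M), ⟨b₂ * u - b₁ * u, ?_⟩, ⟨b₁ * v - b₂ * v, ?_⟩⟩
  · have : b₁ * (v * M) = b₁ * (1 - u * N) := by rw [← huv]; ring
    rw [this]; ring
  · have : b₂ * (u * N) = b₂ * (1 - v * M) := by rw [← huv]; ring
    rw [this]; ring

/-- Glue local solutions at each prime power into a global solution, by strong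
induction on `γ` using CRT. -/
lemma aux_key (mt n : ℕ) : ∀ γ : ℕ, 0 < γ →
    (∀ p : ℕ, p.Prime → p ∣ γ →
      ∃ b : ℤ, IsCoprime b (p : ℤ) ∧ (p : ℤ) ^ (2 * γ.factorization p) ∣ b ^ 2 * mt + n) →
    ∃ b : ℤ, IsCoprime b (γ : ℤ) ∧ (γ : ℤ) ^ 2 ∣ b ^ 2 * mt + n := by
  intro γ
  induction γ using Nat.strong_induction_on with
  | _ γ ih =>
    intro hγ H
    rcases eq_or_lt_of_le (show 1 ≤ γ from hγ) with h1 | h1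
    · -- γ = 1
      refine ⟨1, ?_, ?_⟩
      · rw [← h1]; exact isCoprime_one_left
      · rw [← h1]; norm_num
    · -- γ ≥ 2
      have hγ0 : γ ≠ 0 := hγ.ne'
      have hγ1 : γ ≠ 1 := by omega
      set p := γ.minFac with hpdef
      have hp : p.Prime := Nat.minFac_prime hγ1
      have hpγ : p ∣ γ := Nat.minFac_dvd γ
      set k := γ.factorization p with hkdef
      have hk1 : 1 ≤ k := hp.factorization_pos_of_dvd hγ0 hpγ
      set γ' := γ / p ^ k with hγ'def
      have hsplit : p ^ k * γ' = γ := Nat.ordProj_mul_ordCompl_eq_self γ p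
      have hγ'0 : 0 < γ' := Nat.ordCompl_pos p hγ0
      have hcop : p.Coprime γ' := Nat.coprime_ordCompl hp hγ0
      have hlt : γ' < γ := Nat.div_lt_self hγ (lt_of_lt_of_le hp.one_lt (Nat.le_self_pow (by omega) p))
      -- induction hypothesis for γ'
      obtain ⟨b₂, hb₂cop, hb₂dvd⟩ := ih γ' hlt hγ'0 (by
        intro q hq hqγ'
        have hqγ : q ∣ γ := hqγ'.trans ⟨p ^ k, by rw [← hsplit]; ring⟩
        have hqp : q ≠ p := by
          rintro rfl
          exact hq.one_lt.ne' (Nat.Coprime.eq_one_of_dvd hcop hqγ')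
        have hfac : γ'.factorization q = γ.factorization q := by
          rw [hγ'def, hkdef, Nat.factorization_ordCompl, Finsupp.erase_ne hqp]
        rw [hfac]
        exact H q hq hqγ)
      obtain ⟨b₁, hb₁cop, hb₁dvd⟩ := H p hp hpγ
      -- CRT
      obtain ⟨b, hbN, hbM⟩ := aux_crt (p ^ (2 * k)) (γ' ^ 2) (Nat.Coprime.pow _ _ hcop) b₁ b₂
      push_cast at hbN hbM
      refine ⟨b, ?_, ?_⟩
      · -- coprimality
        have h1 : IsCoprime b (p : ℤ) := by
          obtain ⟨t, ht⟩ := (dvd_pow_self (p:ℤ) (by omega : 2*k ≠ 0)).trans hbN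
          have hb : b = b₁ + (p:ℤ) * t := by linarith [ht]
          rw [hb]
          exact (hb₁cop.symm.add_mul_left_right t).symm
        have h2 : IsCoprime b (γ' : ℤ) := by
          obtain ⟨t, ht⟩ := (dvd_pow_self (γ':ℤ) (two_ne_zero)).trans hbM
          have hb : b = b₂ + (γ':ℤ) * t := by linarith [ht]
          rw [hb]
          exact (hb₂cop.symm.add_mul_left_right t).symm
        have : IsCoprime b ((p:ℤ) ^ k * (γ':ℤ)) := (h1.pow_right).mul_right h2
        have hcast : ((γ:ℕ):ℤ) = (p:ℤ) ^ k * (γ':ℤ) := by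
          rw [← hsplit]; push_cast; ring
        rwa [hcast]
      · -- divisibility
        have hNd : (p:ℤ) ^ (2 * k) ∣ b ^ 2 * mt + n := by
          have : b ^ 2 * mt + n = (b - b₁) * ((b + b₁) * mt) + (b₁ ^ 2 * mt + n) := by ring
          rw [this]
          exact dvd_add (hbN.mul_right _) hb₁dvd
        have hMd : ((γ':ℤ)) ^ 2 ∣ b ^ 2 * mt + n := by
          have : b ^ 2 * mt + n = (b - b₂) * ((b + b₂) * mt) + (b₂ ^ 2 * mt + n) := by ring
          rw [this]
          exact dvd_add (hbM.mul_right _) hb₂dvd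
        have hcopZ : IsCoprime ((p:ℤ) ^ (2 * k)) ((γ':ℤ) ^ 2) := by
          have := Nat.isCoprime_iff_coprime.mpr (Nat.Coprime.pow (2*k) 2 hcop)
          push_cast at this
          exact this
        have := hcopZ.mul_dvd hNd hMd
        have hcast : ((γ:ℕ):ℤ) ^ 2 = (p:ℤ) ^ (2 * k) * (γ':ℤ) ^ 2 := by
          rw [← hsplit]; push_cast; ring
        rwa [hcast]

/-- Existence criterion for `b` coprime to `γ` with `γ² ∣ b²m̃ + n`
(Proposition 3.5, existence part). Here `mt` plays the role of `m̃`. -/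
theorem stmt_4 (mt n γ : ℕ) (hmt : 0 < mt) (hn : 0 < n) (hγ : 2 ≤ γ)
    (hdvd : γ ∣ Nat.gcd (2 * mt) (2 * n)) :
    (∃ b : ℤ, IsCoprime b (γ : ℤ) ∧ (γ : ℤ) ^ 2 ∣ b ^ 2 * mt + n) ↔
      ∀ p : ℕ, p.Prime → p ∣ γ →
        ((mt.factorization p ≠ n.factorization p ∧
            2 * γ.factorization p ≤ min (mt.factorization p) (n.factorization p)) ∨
         (mt.factorization p = n.factorization p ∧
            (2 * γ.factorization p ≤ min (mt.factorization p) (n.factorization p) ∨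
             (2 * γ.factorization p > min (mt.factorization p) (n.factorization p) ∧
              ∃ x : ℤ,
                (p : ℤ) ^ (2 * γ.factorization p
                    - min (mt.factorization p) (n.factorization p)) ∣
                  x ^ 2 * ((mt / p ^ min (mt.factorization p) (n.factorization p) : ℕ) : ℤ)
                    + ((n / p ^ min (mt.factorization p) (n.factorization p) : ℕ) : ℤ))))) := by
  have hγ0 : γ ≠ 0 := by omega
  constructor
  · rintro ⟨b, hbcop, hbdvd⟩ p hp hpγ
    set a := mt.factorization p with hadef
    set c := n.factorization p with hcdef
    set α := min a c with hαdef
    set β := γ.factorization p with hβdef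
    have hβ1 : 1 ≤ β := hp.factorization_pos_of_dvd hγ0 hpγ
    have hpZ : Prime (p : ℤ) := Nat.prime_iff_prime_int.mp hp
    have hbp : IsCoprime b (p : ℤ) := by
      refine hbcop.of_isCoprime_of_dvd_right ?_
      exact_mod_cast Int.natCast_dvd_natCast.mpr hpγ
    have hpow : (p : ℤ) ^ (2 * β) ∣ b ^ 2 * mt + n := by
      refine dvd_trans ?_ hbdvd
      have : (p:ℤ) ^ β ∣ (γ:ℤ) := by
        exact_mod_cast Int.natCast_dvd_natCast.mpr (Nat.ordProj_dvd γ p)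
      calc (p:ℤ) ^ (2*β) = ((p:ℤ) ^ β) ^ 2 := by ring
        _ ∣ (γ:ℤ) ^ 2 := pow_dvd_pow_of_dvd this 2
    -- key cancellation facts
    have hdvdmt : ∀ j, (p:ℤ) ^ j ∣ b ^ 2 * mt + n → ¬ ((p:ℤ)^j ∣ (n:ℤ)) → True := fun _ _ _ => trivial
    by_cases hac : a = c
    · right
      refine ⟨hac, ?_⟩
      by_cases hle : 2 * β ≤ α
      · exact Or.inl hle
      · push_neg at hle
        refine Or.inr ⟨hle, b, ?_⟩
        have hα_a : α ≤ a := min_le_left _ _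
        have hα_c : α ≤ c := min_le_right _ _
        have hmtd : p ^ α ∣ mt := (pow_dvd_pow p hα_a).trans (Nat.ordProj_dvd mt p)
        have hnd : p ^ α ∣ n := (pow_dvd_pow p hα_c).trans (Nat.ordProj_dvd n p)
        have hmt_eq : (mt:ℤ) = (p:ℤ)^α * ((mt / p ^ α : ℕ) : ℤ) := by
          exact_mod_cast congrArg (Nat.cast (R := ℤ)) (Nat.mul_div_cancel' hmtd).symm
        have hn_eq : (n:ℤ) = (p:ℤ)^α * ((n / p ^ α : ℕ) : ℤ) := by
          exact_mod_cast congrArg (Nat.cast (R := ℤ)) (Nat.mul_div_cancel' hnd).symm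
        have key : (p:ℤ) ^ α * ((p:ℤ) ^ (2*β - α)) ∣
            (p:ℤ) ^ α * (b ^ 2 * ((mt / p ^ α : ℕ) : ℤ) + ((n / p ^ α : ℕ) : ℤ)) := by
          have e1 : (p:ℤ) ^ α * ((p:ℤ) ^ (2*β - α)) = (p:ℤ) ^ (2*β) := by
            rw [← pow_add]; congr 1; omega
          have e2 : (p:ℤ) ^ α * (b ^ 2 * ((mt / p ^ α : ℕ) : ℤ) + ((n / p ^ α : ℕ) : ℤ))
              = b ^ 2 * mt + n := by rw [hmt_eq, hn_eq]; ring
          rw [e1, e2]; exact hpow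
        exact (mul_dvd_mul_iff_left (pow_ne_zero α (by exact_mod_cast hp.pos.ne' :
          (p:ℤ) ≠ 0))).mp key
    · left
      refine ⟨hac, ?_⟩
      by_contra hle
      push_neg at hle
      have hα1 : α + 1 ≤ 2 * β := hle
      have hp1 : (p:ℤ) ^ (α+1) ∣ b ^ 2 * mt + n := (pow_dvd_pow _ hα1).trans hpow
      have hcopb2 : IsCoprime ((p:ℤ) ^ (α+1)) (b ^ 2) := hbp.symm.pow
      rcases lt_or_gt_of_ne hac with h | h
      · -- a < c, α = a
        have hαa : α = a := min_eq_left h.le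
        have hcd : (p:ℤ) ^ (α+1) ∣ (n:ℤ) := by
          have : p ^ (α+1) ∣ n := (hp.pow_dvd_iff_le_factorization hn.ne').mpr (by omega)
          exact_mod_cast Int.natCast_dvd_natCast.mpr this
        have hbm : (p:ℤ) ^ (α+1) ∣ b ^ 2 * mt := by
          have : b ^ 2 * (mt:ℤ) = (b ^ 2 * mt + n) - n := by ring
          rw [this]; exact dvd_sub hp1 hcd
        have : (p:ℤ) ^ (α+1) ∣ (mt:ℤ) := hcopb2.dvd_of_dvd_mul_left hbm
        have : p ^ (α+1) ∣ mt := by exact_mod_cast this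
        have := (hp.pow_dvd_iff_le_factorization hmt.ne').mp this
        omega
      · -- c < a, α = c
        have hαc : α = c := min_eq_right h.le
        have hcd : (p:ℤ) ^ (α+1) ∣ b ^ 2 * (mt:ℤ) := by
          have : p ^ (α+1) ∣ mt := (hp.pow_dvd_iff_le_factorization hmt.ne').mpr (by omega)
          exact Dvd.dvd.mul_left (by exact_mod_cast Int.natCast_dvd_natCast.mpr this) _
        have hbm : (p:ℤ) ^ (α+1) ∣ (n:ℤ) := by
          have : (n:ℤ) = (b ^ 2 * mt + n) - b ^ 2 * mt := by ring
          rw [this]; exact dvd_sub hp1 hcd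
        have : p ^ (α+1) ∣ n := by exact_mod_cast hbm
        have := (hp.pow_dvd_iff_le_factorization hn.ne').mp this
        omega
  · intro H
    apply aux_key mt n γ (by omega)
    intro p hp hpγ
    set a := mt.factorization p with hadef
    set c := n.factorization p with hcdef
    set α := min a c with hαdef
    set β := γ.factorization p with hβdef
    have hβ1 : 1 ≤ β := hp.factorization_pos_of_dvd hγ0 hpγ
    have hpZ : Prime (p : ℤ) := Nat.prime_iff_prime_int.mp hp
    have hα_a : α ≤ a := min_le_left _ _
    have hα_c : α ≤ c := min_le_right _ _
    have hmtd : p ^ α ∣ mt := (pow_dvd_pow p hα_a).trans (Nat.ordProj_dvd mt p)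
    have hnd : p ^ α ∣ n := (pow_dvd_pow p hα_c).trans (Nat.ordProj_dvd n p)
    have hmt_eq : (mt:ℤ) = (p:ℤ)^α * ((mt / p ^ α : ℕ) : ℤ) := by
      exact_mod_cast congrArg (Nat.cast (R := ℤ)) (Nat.mul_div_cancel' hmtd).symm
    have hn_eq : (n:ℤ) = (p:ℤ)^α * ((n / p ^ α : ℕ) : ℤ) := by
      exact_mod_cast congrArg (Nat.cast (R := ℤ)) (Nat.mul_div_cancel' hnd).symm
    have easy : 2 * β ≤ α → ∃ b : ℤ, IsCoprime b (p : ℤ) ∧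
        (p : ℤ) ^ (2 * β) ∣ b ^ 2 * mt + n := by
      intro hle
      refine ⟨1, isCoprime_one_left, ?_⟩
      have h1 : p ^ (2*β) ∣ mt := (pow_dvd_pow p hle).trans hmtd
      have h2 : p ^ (2*β) ∣ n := (pow_dvd_pow p hle).trans hnd
      have : (p:ℤ) ^ (2*β) ∣ (mt:ℤ) + n := by
        exact_mod_cast Int.natCast_dvd_natCast.mpr (dvd_add h1 h2)
      simpa using this
    rcases H p hp hpγ with ⟨_, hle⟩ | ⟨hac, hle | ⟨hgt, x, hx⟩⟩
    · exact easy hle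
    · exact easy hle
    · -- square-condition case
      refine ⟨x, ?_, ?_⟩
      · -- x coprime to p
        have hαc' : α = c := by omega
        have hncop : ¬ (p:ℤ) ∣ ((n / p ^ α : ℕ) : ℤ) := by
          rw [Int.natCast_dvd_natCast]
          intro hd
          have := Nat.coprime_ordCompl hp hn.ne'
          rw [← hcdef, ← hαc'] at this
          exact hp.one_lt.ne' (Nat.Coprime.eq_one_of_dvd this hd)
        refine (hpZ.coprime_iff_not_dvd.mpr ?_).symm
        intro hpx
        apply hncop
        have h1 : (p:ℤ) ∣ x ^ 2 * ((mt / p ^ α : ℕ) : ℤ) + ((n / p ^ α : ℕ) : ℤ) := by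
          refine dvd_trans ?_ hx
          exact dvd_pow_self _ (by omega : 2*β - α ≠ 0)
        have h2 : (p:ℤ) ∣ x ^ 2 * ((mt / p ^ α : ℕ) : ℤ) := (dvd_pow hpx two_ne_zero).mul_right _
        have : ((n / p ^ α : ℕ) : ℤ) = (x ^ 2 * ((mt / p ^ α : ℕ) : ℤ) + ((n / p ^ α : ℕ) : ℤ))
            - x ^ 2 * ((mt / p ^ α : ℕ) : ℤ) := by ring
        rw [this]; exact dvd_sub h1 h2
      · have e1 : (p:ℤ) ^ (2*β) = (p:ℤ) ^ α * ((p:ℤ) ^ (2*β - α)) := by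
          rw [← pow_add]; congr 1; omega
        have e2 : x ^ 2 * (mt:ℤ) + n
            = (p:ℤ) ^ α * (x ^ 2 * ((mt / p ^ α : ℕ) : ℤ) + ((n / p ^ α : ℕ) : ℤ)) := by
          rw [hmt_eq, hn_eq]; ring
        rw [e1, e2]
        exact mul_dvd_mul_left _ hx
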